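/- Let A be a finite alphabet, a ∈ A, l a positive integer, and (σ_n : A → A* ; n ∈ ℕ) a sequence of morphisms of constant length l (i.e. |σ_n(b)| = l for every n and every b ∈ A), and suppose y = lim_{n→∞} σ_0σ_1⋯σ_n(aaa⋯) exists in A^ℕ. Then p_y(n) ≤ l (Card A)² n for all n ≥ 1. -/

import Mathlib

namespace DurandLR

variable {A B : Type*}

/-- `u` occurs at position `i` in the one-sided sequence `x`. -/
def OccursAt (x : ℕ → A) (u : List A) (i : ℕ) : Prop :=
  ∀ k : Fin u.length, x (i + (k : ℕ)) = u.get k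

/-- `u` occurs (somewhere) in the one-sided sequence `x`. -/
def Occurs (x : ℕ → A) (u : List A) : Prop := ∃ i, OccursAt x u i

/-- `u` occurs at position `i` in the two-sided sequence `x`. -/
def OccursAtZ (x : ℤ → A) (u : List A) (i : ℤ) : Prop :=
  ∀ k : Fin u.length, x (i + (k : ℕ)) = u.get k

def OccursZ (x : ℤ → A) (u : List A) : Prop := ∃ i, OccursAtZ x u i

/-- The word `u` has exactly `m` occurrences in the finite word `w`. -/
def OccCountEq (u w : List A) (m : ℕ) : Prop :=
  {i : ℕ | u <+: w.drop i}.ncard = m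

/-- `w` is a return word to `u` in the one-sided sequence `x`: `wu` occurs in `x`,
`u` is a prefix of `wu` and `u` has exactly two occurrences in `wu`. -/
def IsReturnWord (x : ℕ → A) (u w : List A) : Prop :=
  Occurs x (w ++ u) ∧ u <+: (w ++ u) ∧ OccCountEq u (w ++ u) 2

/-- `w` is a return word to `u` in the two-sided sequence `x`. -/
def IsReturnWordZ (x : ℤ → A) (u w : List A) : Prop :=
  OccursZ x (w ++ u) ∧ u <+: (w ++ u) ∧ OccCountEq u (w ++ u) 2

/-- `x` is uniformly recurrent: every word occurring in `x` occurs with bounded gaps. -/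
def UniformlyRecurrent (x : ℕ → A) : Prop :=
  ∀ u, Occurs x u → ∃ M : ℕ, ∀ i : ℕ, ∃ j, i ≤ j ∧ j < i + M ∧ OccursAt x u j

def UniformlyRecurrentZ (x : ℤ → A) : Prop :=
  ∀ u, OccursZ x u → ∃ M : ℕ, ∀ i : ℤ, ∃ j : ℤ, i ≤ j ∧ j < i + M ∧ OccursAtZ x u j

/-- `x` is linearly recurrent with constant `K`. -/
def LinearlyRecurrentWith (x : ℕ → A) (K : ℕ) : Prop :=
  UniformlyRecurrent x ∧ ∀ u w, IsReturnWord x u w → w.length ≤ K * u.length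

def LinearlyRecurrent (x : ℕ → A) : Prop := ∃ K, LinearlyRecurrentWith x K

def LinearlyRecurrentZ (x : ℤ → A) : Prop :=
  UniformlyRecurrentZ x ∧ ∃ K : ℕ, ∀ u w, IsReturnWordZ x u w → w.length ≤ K * u.length

/-- The subshift generated by a two-sided sequence `x` : all `z` whose finite subwords
occur in `x`. -/
def SubshiftGenZ (x : ℤ → A) : Set (ℤ → A) := {z | ∀ u, OccursZ z u → OccursZ x u}

/-- The subshift generated by a one-sided sequence `x`. -/
def SubshiftGen (x : ℕ → A) : Set (ℤ → A) := {z | ∀ u, OccursZ z u → Occurs x u}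

/-- A minimal subshift: nonempty and every element generates it. -/
def IsMinimalSubshift (X : Set (ℤ → A)) : Prop :=
  X.Nonempty ∧ ∀ z ∈ X, X = SubshiftGenZ z

/-- A linearly recurrent subshift: minimal and containing an LR sequence. -/
def IsLRSubshift (X : Set (ℤ → A)) : Prop :=
  IsMinimalSubshift X ∧ ∃ x ∈ X, LinearlyRecurrentZ x

def IsPeriodic (z : ℤ → A) : Prop := ∃ p : ℕ, 0 < p ∧ ∀ n : ℤ, z (n + p) = z n

/-- Image of a finite word under a morphism (substitution). -/
def wordMap (σ : A → List B) : List A → List B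
  | [] => []
  | a :: u => σ a ++ wordMap σ u

/-- Composition of two morphisms: `compM σ τ = σ ∘ τ`. -/
def compM (σ τ : A → List A) : A → List A := fun b => wordMap σ (τ b)

/-- Iterate of a morphism: `powM σ n = σ^n`. -/
def powM (σ : A → List A) : ℕ → A → List A
  | 0 => fun b => [b]
  | n + 1 => compM σ (powM σ n)

/-- `chain σ r n = σ_r ∘ σ_{r+1} ∘ ⋯ ∘ σ_{r+n-1}` (the empty composition for `n = 0`). -/
def chain (σ : ℕ → A → List A) (r : ℕ) : ℕ → A → List A
  | 0 => fun b => [b]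
  | n + 1 => fun b => wordMap (chain σ r n) (σ (r + n) b)

/-- The periodic infinite sequence `www⋯` obtained by repeating the word `w`
(with a default letter for the degenerate empty case). -/
def repSeq (w : List A) (d : A) : ℕ → A := fun i => w.getD (i % w.length) d

/-- The prefix of length `n` of the sequence `x`, as a word. -/
def seqTake (x : ℕ → A) (n : ℕ) : List A := (List.range n).map x

/-- `y` is the image of the infinite sequence `z` under the morphism `σ`:
the image of every prefix of `z` is a prefix of `y`. -/
def IsSeqImage (σ : A → List B) (z : ℕ → A) (y : ℕ → B) : Prop :=
  ∀ n, seqTake y (wordMap σ (seqTake z n)).length = wordMap σ (seqTake z n)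

/-- `σ_0 σ_1 ⋯ σ_n (aaa⋯)` converges to `x` in the product topology, where the `n`-th
approximation is the periodic sequence obtained by repeating the word `W n`. -/
def ConvergesTo (W : ℕ → List A) (d : A) (x : ℕ → A) : Prop :=
  ∀ m, ∃ N, ∀ n ≥ N, repSeq (W n) d m = x m

/-- A proper morphism: all images begin with the same letter and end with the same letter. -/
def ProperMorphism (σ : A → List A) : Prop :=
  ∃ l r : A, ∀ b, (σ b).head? = some l ∧ (σ b).getLast? = some r

/-- Primitivity with constant `s₀` of a directive sequence of morphisms
`σ_n : A_{n+1} → A_n^*`: every `b ∈ A_r` occurs in `σ_{r+1} ⋯ σ_{r+s₀} (c)`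
for every `c ∈ A_{r+s₀+1}`. -/
def PrimitiveWith (σ : ℕ → A → List A) (Aseq : ℕ → Set A) (s0 : ℕ) : Prop :=
  ∀ r : ℕ, ∀ b ∈ Aseq r, ∀ c ∈ Aseq (r + s0 + 1), b ∈ chain σ (r + 1) s0 c

/-- The data of an S-adic system: `a` belongs to every alphabet and
`σ_n` maps `A_{n+1}` into words over `A_n`. -/
def SAdicSystem (σ : ℕ → A → List A) (Aseq : ℕ → Set A) (a : A) : Prop :=
  (∀ n, a ∈ Aseq n) ∧ (∀ n, ∀ b ∈ Aseq (n + 1), ∀ c ∈ σ n b, c ∈ Aseq n)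

/-- `x` is the S-adic sequence generated by the directive sequence `σ` and letter `a`:
`σ_0 σ_1 ⋯ σ_n (aaa⋯)` converges to `x`. -/
def GeneratesSAdic (σ : ℕ → A → List A) (Aseq : ℕ → Set A) (a : A) (x : ℕ → A) : Prop :=
  SAdicSystem σ Aseq a ∧ ConvergesTo (fun n => chain σ 0 (n + 1) a) a x

/-- The complexity function `p_x(n)`: the number of distinct words of length `n`
occurring in `x`. -/
noncomputable def complexity (x : ℕ → A) (n : ℕ) : ℕ := {u : List A | u.length = n ∧ Occurs x u}.ncard

/-- Any two successive occurrences of `u` in `x` differ by at most `M`. -/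
def GapsBoundedBy (x : ℕ → A) (u : List A) (M : ℕ) : Prop :=
  ∀ i j, OccursAt x u i → OccursAt x u j → i < j →
    (∀ k, i < k → k < j → ¬ OccursAt x u k) → j - i ≤ M

/-- The finite word `x_{[p,q)}` of a two-sided sequence. -/
def zSeg (x : ℤ → A) (p q : ℤ) : List A := (List.range (q - p).toNat).map fun t => x (p + t)

/-- `w` is a return word to `u.v` in the two-sided sequence `x`: there are two
consecutive occurrences `j < k` of `uv` in `x` with `w = x_{[j+|u|, k+|u|)}`. -/
def IsReturnWordUV (x : ℤ → A) (u v w : List A) : Prop :=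
  ∃ j k : ℤ, OccursAtZ x (u ++ v) j ∧ OccursAtZ x (u ++ v) k ∧ j < k ∧
    (∀ i : ℤ, j < i → i < k → ¬ OccursAtZ x (u ++ v) i) ∧
    w = zSeg x (j + u.length) (k + u.length)

/-- The substitution `σ` on `{a,b,c} = {0,1,2}`: `σ(a)=acb`, `σ(b)=bab`, `σ(c)=cbc`. -/
def sigma3 : Fin 3 → List (Fin 3) := ![[0, 2, 1], [1, 0, 1], [2, 1, 2]]

/-- The substitution `τ` on `{a,b,c} = {0,1,2}`: `τ(a)=abc`, `τ(b)=acb`, `τ(c)=aac`. -/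
def tau3 : Fin 3 → List (Fin 3) := ![[0, 1, 2], [0, 2, 1], [0, 0, 2]]

/-- `rho n = σ τ σ² τ ⋯ σⁿ τ` (identity for `n = 0`). -/
def rho : ℕ → Fin 3 → List (Fin 3)
  | 0 => fun b => [b]
  | n + 1 => compM (rho n) (compM (powM sigma3 (n + 1)) tau3)

/-- `psi n l = σ^{n+2} τ σ^{n+3} τ ⋯ σ^{n+l+1} τ` (identity for `l = 0`). -/
def psi (n : ℕ) : ℕ → Fin 3 → List (Fin 3)
  | 0 => fun b => [b]
  | l + 1 => compM (psi n l) (compM (powM sigma3 (n + 2 + l)) tau3)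

/-- The Sturmian substitution `τ` on `{0,1}`: `τ(0)=0`, `τ(1)=10`. -/
def tau2 : Fin 2 → List (Fin 2) := ![[0], [1, 0]]

/-- The Sturmian substitution `σ` on `{0,1}`: `σ(0)=01`, `σ(1)=1`. -/
def sigma2 : Fin 2 → List (Fin 2) := ![[0, 1], [1]]

/-- `xi i k = τ^{i₁} σ^{i₂} τ^{i₃} ⋯ τ^{i_{2k-1}} σ^{i_{2k}}` (identity for `k = 0`). -/
def xi (i : ℕ → ℕ) : ℕ → Fin 2 → List (Fin 2)
  | 0 => fun b => [b]
  | k + 1 => compM (xi i k) (compM (powM tau2 (i (2 * k + 1))) (powM sigma2 (i (2 * k + 2))))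

/-- `a : ℕ → ℕ` gives (from index 1 on) the continued fraction expansion
`α = [0; a₁, a₂, a₃, …]`, expressed through the Gauss map. -/
def IsCFExpansion (α : ℝ) (a : ℕ → ℕ) : Prop :=
  ∃ β : ℕ → ℝ, β 0 = α ∧ ∀ n : ℕ,
    0 < β n ∧ β n < 1 ∧ (a (n + 1) : ℤ) = ⌊1 / β n⌋ ∧ β (n + 1) = 1 / β n - ⌊1 / β n⌋

lemma wordMap_append (σ : A → List B) (u v : List A) :
    wordMap σ (u ++ v) = wordMap σ u ++ wordMap σ v := by
  induction u with
  | nil => simp [wordMap]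
  | cons a u ih => simp [wordMap, ih]

lemma wordMap_length {σ : A → List B} {L : ℕ} (h : ∀ b, (σ b).length = L) (u : List A) :
    (wordMap σ u).length = L * u.length := by
  induction u with
  | nil => simp [wordMap]
  | cons a u ih => simp [wordMap, ih, h]; ring

lemma wordMap_wordMap (f : B → List C) (g : A → List B) (u : List A) :
    wordMap f (wordMap g u) = wordMap (fun b => wordMap f (g b)) u := by
  induction u with
  | nil => rfl
  | cons a u ih => simp [wordMap, wordMap_append, ih]

lemma chain_length {σ : ℕ → A → List A} {l : ℕ} (h : ∀ n b, (σ n b).length = l) :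
    ∀ (m r : ℕ) (b : A), (chain σ r m b).length = l ^ m
  | 0, r, b => by simp [chain]
  | m + 1, r, b => by
    have : ∀ c, (chain σ r m c).length = l ^ m := fun c => chain_length h m r c
    simp [chain, wordMap_length this, h, pow_succ, Nat.mul_comm, Nat.add_sub_cancel]

lemma chain_add (σ : ℕ → A → List A) (r m : ℕ) :
    ∀ (n : ℕ) (b : A), chain σ r (m + n) b = wordMap (chain σ r m) (chain σ (r + m) n b)
  | 0, b => by simp [chain, wordMap]
  | n + 1, b => by
    have ih : chain σ r (m + n) = fun c => wordMap (chain σ r m) (chain σ (r + m) n c) :=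
      funext fun c => chain_add σ r m n c
    show wordMap (chain σ r (m + n)) (σ (r + (m + n)) b) = _
    rw [ih, ← wordMap_wordMap]
    show _ = wordMap (chain σ r m) (wordMap (chain σ (r + m) n) (σ (r + m + n) b))
    rw [Nat.add_assoc]

lemma wordMap_getD {τ : A → List B} {L : ℕ} (hτ : ∀ b, (τ b).length = L) (d : B) (d₀ : A) :
    ∀ (w : List A) (q s : ℕ), q < w.length → s < L →
      (wordMap τ w).getD (q * L + s) d = (τ (w.getD q d₀)).getD s d
  | [], q, s, hq, _ => by simp at hq
  | b :: w, 0, s, hq, hs => by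
    show (τ b ++ wordMap τ w).getD (0 * L + s) d = _
    rw [Nat.zero_mul, Nat.zero_add, List.getD_append _ _ _ _ (by rw [hτ]; exact hs)]
    rfl
  | b :: w, q + 1, s, hq, hs => by
    show (τ b ++ wordMap τ w).getD ((q + 1) * L + s) d = _
    have h1 : (q + 1) * L + s = (τ b).length + (q * L + s) := by rw [hτ]; ring
    rw [h1, List.getD_append_right _ _ _ _ (Nat.le_add_right _ _), Nat.add_sub_cancel_left]
    exact wordMap_getD hτ d d₀ w q s (Nat.lt_of_succ_lt_succ hq) hs


/-- If `y` is the limit of `σ_0σ_1⋯σ_n(aaa⋯)` for morphisms of constant length `l`,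
then `p_y(n) ≤ l (Card A)² n`. -/
theorem complexity_bound_constant_length {A : Type*} [Fintype A]
    (a : A) (l : ℕ) (hl : 0 < l)
    (σseq : ℕ → A → List A) (hlen : ∀ n b, (σseq n b).length = l)
    (y : ℕ → A) (hy : ConvergesTo (fun n => chain σseq 0 (n + 1) a) a y) :
    ∀ n ≥ 1, complexity y n ≤ l * (Fintype.card A) ^ 2 * n := by
  classical
  intro n hn
  have hcard : 1 ≤ Fintype.card A := Fintype.card_pos_iff.mpr ⟨a⟩
  choose Nf hNf using hy
  have hWlen : ∀ m : ℕ, (chain σseq 0 (m + 1) a).length = l ^ (m + 1) :=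
    fun m => chain_length hlen (m + 1) 0 a
  rcases Nat.lt_or_ge l 2 with hl1 | hl2
  · -- l = 1
    have hl1 : l = 1 := by omega
    subst hl1
    have hW1 : ∀ m : ℕ, (chain σseq 0 (m + 1) a).length = 1 := by
      intro m; rw [hWlen m, one_pow]
    have hconst : ∀ m, y m = y 0 := by
      intro m
      set M := max (Nf m) (Nf 0) with hM
      have h1 := hNf m M (le_max_left _ _)
      have h2 := hNf 0 M (le_max_right _ _)
      simp only [repSeq, hW1 M, Nat.mod_one] at h1 h2
      rw [← h1, ← h2]
    have hsub : {u : List A | u.length = n ∧ Occurs y u} ⊆ {List.replicate n (y 0)} := by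
      rintro u ⟨hulen, i, hocc⟩
      refine Set.mem_singleton_iff.mpr (List.ext_getElem (by simp [hulen]) ?_)
      intro j h1 h2
      have h3 := hocc ⟨j, by omega⟩
      simp only [List.get_eq_getElem] at h3
      rw [← h3, hconst (i + j), List.getElem_replicate]
    calc complexity y n ≤ ({List.replicate n (y 0)} : Set (List A)).ncard :=
          Set.ncard_le_ncard hsub (Set.finite_singleton _)
      _ = 1 := Set.ncard_singleton _
      _ ≤ 1 * (Fintype.card A) ^ 2 * n := by
          nlinarith [Nat.one_le_pow 2 (Fintype.card A) hcard, hn]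
  · -- l ≥ 2
    set k := Nat.clog l n with hk
    set L := l ^ k with hLdef
    have hLpos : 0 < L := pow_pos hl k
    have hnL : n ≤ L := Nat.le_pow_clog hl2 n
    have hLln : L ≤ l * n := by
      rcases Nat.lt_or_ge n 2 with h2 | h2
      · have hn1 : n = 1 := by omega
        have : k = 0 := by rw [hk, hn1, Nat.clog_one_right]
        rw [hLdef, this, pow_zero, hn1, mul_one]
        exact hl
      · have hkpos : 0 < k := Nat.clog_pos hl2 h2
        have h3 : l ^ (k - 1) < n := Nat.pow_pred_clog_lt_self hl2 h2
        have h4 : L = l * l ^ (k - 1) := by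
          rw [hLdef, show k = k - 1 + 1 by omega, pow_succ, Nat.mul_comm, Nat.add_sub_cancel]
        rw [h4]
        exact Nat.mul_le_mul_left l (le_of_lt h3)
    set τ := chain σseq 0 k with hτdef
    have hτlen : ∀ b, (τ b).length = L := fun b => chain_length hlen k 0 b
    set F : A × A × Fin L → List A :=
      fun p => ((τ p.1 ++ τ p.2.1).drop (p.2.2 : ℕ)).take n with hF
    have hsub : {u : List A | u.length = n ∧ Occurs y u} ⊆ Set.range F := by
      rintro u ⟨hulen, i, hocc⟩
      set q := i / L with hq
      set s := i % L with hs
      have hsL : s < L := Nat.mod_lt _ hLpos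
      have hi : q * L + s = i := by rw [hq, hs, Nat.mul_comm]; exact Nat.div_add_mod i L
      set M := max ((Finset.range (i + n)).sup Nf) (i + 2 * L + n + k) with hM
      have hMk : k ≤ M := le_trans (by omega) (le_max_right _ _)
      have hMbig : i + 2 * L ≤ l ^ (M + 1) := by
        have h1 : i + 2 * L + n + k ≤ M := le_max_right _ _
        have h2 : M < l ^ M := Nat.lt_pow_self (n := M) hl2
        have h3 : l ^ M ≤ l ^ (M + 1) := Nat.pow_le_pow_right (by omega) (by omega)
        omega
      set W := chain σseq 0 (M + 1) a with hW
      have hyW : ∀ m, m < i + n → y m = W.getD m a := by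
        intro m hm
        have h1 : Nf m ≤ M :=
          le_trans (Finset.le_sup (Finset.mem_range.mpr hm)) (le_max_left _ _)
        have h2 := hNf m M h1
        simp only [repSeq] at h2
        have hmlen : m < l ^ (M + 1) := by omega
        rw [← h2, hW]
        simp only [repSeq, hWlen M, Nat.mod_eq_of_lt hmlen]
    -- decomposition of W
      set t := M + 1 - k with ht
      set w := chain σseq k t a with hwdef
      have hWw : W = wordMap τ w := by
        have hca := chain_add σseq 0 k t a
        rw [Nat.zero_add] at hca
        rw [hW, hwdef, hτdef, show M + 1 = k + t by omega, hca]
      have hwlen : w.length = l ^ t := chain_length hlen t k a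
      have hq2 : q + 2 ≤ w.length := by
        have h0 : q * L ≤ i := by omega
        have h1 : (q + 2) * L ≤ l ^ (M + 1) := by
          have : (q + 2) * L = q * L + 2 * L := by ring
          omega
        have h2 : l ^ (M + 1) = w.length * L := by
          rw [hwlen, hLdef, ← pow_add]
          congr 1
          omega
        rw [h2] at h1
        exact Nat.le_of_mul_le_mul_right h1 hLpos
      refine ⟨(w.getD q a, w.getD (q + 1) a, ⟨s, hsL⟩), ?_⟩
      set b := w.getD q a with hb
      set c := w.getD (q + 1) a with hc
      show ((τ b ++ τ c).drop s).take n = u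
      have hlenF : (((τ b ++ τ c).drop s).take n).length = n := by
        simp only [List.length_take, List.length_drop, List.length_append, hτlen]
        omega
      refine List.ext_getElem (by rw [hlenF, hulen]) ?_
      intro j hj1 hj2
      rw [hlenF] at hj1
      have hju := hocc ⟨j, by omega⟩
      simp only [List.get_eq_getElem] at hju
      have hy1 : y (i + j) = W.getD (i + j) a := hyW (i + j) (by omega)
      have hLHS : (((τ b ++ τ c).drop s).take n)[j] = (τ b ++ τ c).getD (s + j) a := by
        rw [List.getElem_take, List.getElem_drop]
        exact (List.getD_eq_getElem _ _ (by simp only [List.length_append, hτlen]; omega)).symm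
      rw [hLHS, ← hju, hy1, hWw]
      rcases Nat.lt_or_ge (s + j) L with hcase | hcase
      · have hidx : i + j = q * L + (s + j) := by omega
        rw [hidx, wordMap_getD hτlen a a w q (s + j) (by omega) hcase, ← hb]
        rw [List.getD_append _ _ _ _ (by rw [hτlen]; exact hcase)]
      · have hidx : i + j = (q + 1) * L + (s + j - L) := by
          have : (q + 1) * L = q * L + L := by ring
          omega
        have hlt : s + j - L < L := by omega
        rw [hidx, wordMap_getD hτlen a a w (q + 1) (s + j - L) (by omega) hlt, ← hc]
        rw [List.getD_append_right _ _ _ _ (by rw [hτlen]; exact hcase), hτlen]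
    calc complexity y n
        ≤ (Set.range F).ncard := Set.ncard_le_ncard hsub (Set.finite_range F)
      _ ≤ (Set.univ : Set (A × A × Fin L)).ncard := by
          rw [← Set.image_univ]
          exact Set.ncard_image_le Set.finite_univ
      _ = Fintype.card A * (Fintype.card A * L) := by
          rw [Set.ncard_univ, Nat.card_eq_fintype_card]
          simp [Fintype.card_prod]
      _ ≤ l * Fintype.card A ^ 2 * n := by nlinarith [hLln, hcard]

end DurandLR
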